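/- Let (X,Y): [0,1] → R² be a centred Gaussian process with bounded variation paths, whose covariance R_{(X,Y)} has ρ-variation controlled by a 2D control ω, ρ < 2, and let γ > ρ. Define X^{(n)}_{s,t} = (X_{s,t})ⁿ/n! and similarly Y^{(n)}. Then for every n there is C(n) such that |X^{(n)}_{s,t} − Y^{(n)}_{s,t}|_{L²} ≤ C(n) ε ω([s,t]²)^{1/(2γ)} ω([s,t]²)^{(n−1)/(2ρ)} for all s < t, where ε² = V_∞(R_{X−Y},[s,t]²)^{1−ρ/γ}. -/

import Mathlib

open Set MeasureTheory ProbabilityTheory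
open scoped ENNReal NNReal

noncomputable section

/-- Rectangular increment of `f : ℝ → ℝ → ℝ` over the rectangle `[a,b] × [c,d]`. -/
def inc2 (f : ℝ → ℝ → ℝ) (a b c d : ℝ) : ℝ := f b d - f b c - f a d + f a c

/-- A grid (partition) of the interval `[s,t]`. -/
structure Grid (s t : ℝ) where
  n : ℕ
  pts : Fin (n + 1) → ℝ
  mono : Monotone pts
  first : pts 0 = s
  last : pts (Fin.last n) = t

/-- 2D `p`-variation of `f` over `[s,t] × [u,v]`, as the supremum over grid partitions of
`(Σ_{i,j} |f(increment over grid rectangle)|^p)^{1/p}` (valued in `ℝ≥0∞`). -/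
def V2 (p : ℝ) (f : ℝ → ℝ → ℝ) (s t u v : ℝ) : ℝ≥0∞ :=
  ⨆ (D : Grid s t) (E : Grid u v),
    (∑ i : Fin D.n, ∑ j : Fin E.n,
      (ENNReal.ofReal
        |inc2 f (D.pts i.castSucc) (D.pts i.succ) (E.pts j.castSucc) (E.pts j.succ)|) ^ p)
      ^ (1 / p)

/-- `V_∞`: the supremum of absolute rectangular increments over sub-rectangles of
`[s,t] × [u,v]`. -/
def Vinf (f : ℝ → ℝ → ℝ) (s t u v : ℝ) : ℝ≥0∞ :=
  ⨆ (a ∈ Icc s t) (b ∈ Icc s t) (c ∈ Icc u v) (e ∈ Icc u v) (_ : a ≤ b) (_ : c ≤ e),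
    ENNReal.ofReal |inc2 f a b c e|

/-- A rectangle `[a,b] × [c,d]` is coded by the 4-tuple `(a,b,c,d)`. -/
abbrev Rect : Type := ℝ × ℝ × ℝ × ℝ

def Rect.set (r : Rect) : Set (ℝ × ℝ) := Icc r.1 r.2.1 ×ˢ Icc r.2.2.1 r.2.2.2

def Rect.proper (r : Rect) : Prop := r.1 ≤ r.2.1 ∧ r.2.2.1 ≤ r.2.2.2

def Rect.inc (f : ℝ → ℝ → ℝ) (r : Rect) : ℝ := inc2 f r.1 r.2.1 r.2.2.1 r.2.2.2

/-- `Π` is a partition of the rectangle `R` into finitely many essentially disjoint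
rectangles. -/
def IsRectPartition (prt : Finset Rect) (R : Rect) : Prop :=
  (∀ r ∈ prt, Rect.proper r) ∧ (⋃ r ∈ prt, Rect.set r) = Rect.set R ∧
    ∀ r ∈ prt, ∀ r' ∈ prt, r ≠ r' → interior (Rect.set r ∩ Rect.set r') = ∅

/-- A 2D control: continuous, nonnegative, vanishing on degenerate rectangles and
superadditive under partitions of rectangles in `[0,1]²` into essentially disjoint
rectangles. -/
def IsControl2 (ω : ℝ → ℝ → ℝ → ℝ → ℝ) : Prop :=
  Continuous (fun q : ℝ × ℝ × ℝ × ℝ => ω q.1 q.2.1 q.2.2.1 q.2.2.2) ∧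
  (∀ a b c d, 0 ≤ ω a b c d) ∧
  (∀ a c d, ω a a c d = 0) ∧ (∀ a b c, ω a b c c = 0) ∧
  (∀ R : Rect, Rect.proper R → Rect.set R ⊆ Icc (0:ℝ) 1 ×ˢ Icc (0:ℝ) 1 →
    ∀ prt : Finset Rect, IsRectPartition prt R →
      (∑ r ∈ prt, ω r.1 r.2.1 r.2.2.1 r.2.2.2) ≤ ω R.1 R.2.1 R.2.2.1 R.2.2.2)

/-- Controlled `p`-variation of `f` over the rectangle `R`: the supremum over all partitions
of `R` into essentially disjoint rectangles of `(Σ_{A∈Π} |f(A)|^p)^{1/p}`. -/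
def ctrlVar (p : ℝ) (f : ℝ → ℝ → ℝ) (R : Rect) : ℝ≥0∞ :=
  ⨆ (prt : Finset Rect) (_ : IsRectPartition prt R),
    (∑ r ∈ prt, (ENNReal.ofReal |Rect.inc f r|) ^ p) ^ (1 / p)


/-- `m`-th moment of the standard Gaussian. -/
def gmom (m : ℕ) : ℝ := ∫ x, x ^ m ∂(gaussianReal 0 1)

lemma integrable_pow_gaussianReal (v : ℝ≥0) (m : ℕ) :
    Integrable (fun x : ℝ => x ^ m) (gaussianReal 0 v) := by
  by_cases hv : v = 0
  · subst hv
    rw [gaussianReal_zero_var]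
    refine ⟨(measurable_id'.pow_const m).aestronglyMeasurable, ?_⟩
    rw [HasFiniteIntegral, lintegral_dirac]
    exact ENNReal.coe_lt_top
  · rw [gaussianReal_of_var_ne_zero _ hv]
    rw [integrable_withDensity_iff (measurable_gaussianPDF _ _)
      (ae_of_all _ fun x => ENNReal.ofReal_lt_top)]
    have hb : (0:ℝ) < (2 * (v:ℝ))⁻¹ := by
      have : (0:ℝ) < (v:ℝ) := lt_of_le_of_ne (v.coe_nonneg) (by exact_mod_cast (Ne.symm hv))
      positivity
    have hint : Integrable (fun x : ℝ => x ^ (m:ℝ) * Real.exp (-(2*(v:ℝ))⁻¹ * x ^ 2)) :=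
      integrable_rpow_mul_exp_neg_mul_sq hb (lt_of_lt_of_le neg_one_lt_zero (Nat.cast_nonneg m))
    have hint' : Integrable (fun x : ℝ => x ^ m * Real.exp (-(2*(v:ℝ))⁻¹ * x ^ 2)) := by
      refine hint.congr ?_
      refine ae_of_all _ fun x => ?_
      simp only []
      rw [show ((m:ℝ)) = ((m:ℕ):ℝ) from rfl, Real.rpow_natCast]
    refine Integrable.mono' (hint'.abs.const_mul ((Real.sqrt (2 * Real.pi * v))⁻¹)) ?_ ?_
    · exact ((measurable_id'.pow_const m).mul
        ((measurable_gaussianPDF 0 v).ennreal_toReal)).aestronglyMeasurable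
    · refine ae_of_all _ fun x => ?_
      have h1 : (gaussianPDF 0 v x).toReal = gaussianPDFReal 0 v x :=
        ENNReal.toReal_ofReal (gaussianPDFReal_nonneg _ _ _)
      rw [h1]
      have h2 : gaussianPDFReal 0 v x
          = (Real.sqrt (2 * Real.pi * v))⁻¹ * Real.exp (-(2*(v:ℝ))⁻¹ * x ^ 2) := by
        rw [gaussianPDFReal]
        rw [sub_zero]
        congr 2
        field_simp
      rw [h2, Real.norm_eq_abs, abs_mul, abs_mul]
      have h4 : |(Real.sqrt (2 * Real.pi * v))⁻¹| = (Real.sqrt (2 * Real.pi * v))⁻¹ := by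
        rw [abs_of_nonneg]; positivity
      rw [h4]
      rw [abs_of_nonneg (Real.exp_nonneg _)]
      rw [abs_mul, abs_of_nonneg (Real.exp_nonneg _)]
      ring_nf
      exact le_refl _

lemma integral_pow_gaussianReal (v : ℝ≥0) (m : ℕ) :
    ∫ x, x ^ (2*m) ∂(gaussianReal 0 v) = gmom (2*m) * (v:ℝ) ^ m := by
  by_cases hv : v = 0
  · subst hv
    rw [gaussianReal_zero_var, integral_dirac]
    cases m with
    | zero => simp [gmom]
    | succ k =>
      rw [zero_pow (by omega)]
      push_cast
      rw [zero_pow (by omega)]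
      ring
  · have hc : (0:ℝ) ≤ (v:ℝ) := v.coe_nonneg
    have hmap : gaussianReal 0 v = (gaussianReal 0 1).map (fun x => Real.sqrt v * x) := by
      have := gaussianReal_map_const_mul (μ := 0) (v := 1) (Real.sqrt v)
      rw [this]
      congr 1
      · ring
      · ext
        push_cast
        rw [mul_one, Real.sq_sqrt hc]
    rw [hmap, integral_map (measurable_const_mul _).aemeasurable
      (measurable_id'.pow_const _).aestronglyMeasurable]
    have heq : ∀ x : ℝ, (Real.sqrt v * x) ^ (2*m) = (v:ℝ)^m * x ^ (2*m) := by
      intro x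
      rw [mul_pow, pow_mul, Real.sq_sqrt hc]
    simp only [heq]
    rw [integral_const_mul, gmom, mul_comm]

lemma gmom_nonneg (m : ℕ) : 0 ≤ gmom (2*m) :=
  integral_nonneg fun x => (even_two_mul m).pow_nonneg x

lemma gmom_two_pos : 0 < gmom 2 := by
  have h2 : (2:ℕ) = 2*1 := rfl
  have hnn : (0:ℝ≥0∞) < gaussianReal 0 1 (Function.support fun x : ℝ => x ^ 2) := by
    have hsupp : (Function.support fun x : ℝ => x ^ 2) = {(0:ℝ)}ᶜ := by
      ext x
      simp [Function.mem_support, pow_eq_zero_iff]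
    rw [hsupp]
    have h0 : gaussianReal 0 1 {(0:ℝ)} = 0 :=
      gaussianReal_absolutelyContinuous 0 one_ne_zero Real.volume_singleton
    rw [measure_compl (measurableSet_singleton 0) (measure_ne_top _ _), h0]
    simp
  have := (integral_pos_iff_support_of_nonneg (fun x : ℝ => sq_nonneg x)
    (integrable_pow_gaussianReal 1 2)).mpr hnn
  exact this

section RV
variable {Ω : Type*} [MeasurableSpace Ω] (P : Measure Ω) [IsProbabilityMeasure P]

lemma gauss_rv_integrable_pow {f : Ω → ℝ} (hf : Measurable f) {v : ℝ≥0}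
    (h : Measure.map f P = gaussianReal 0 v) (m : ℕ) :
    Integrable (fun ω => f ω ^ m) P := by
  have h1 : Integrable (fun x : ℝ => x ^ m) (Measure.map f P) := by
    rw [h]; exact integrable_pow_gaussianReal v m
  exact (integrable_map_measure (measurable_id'.pow_const m).aestronglyMeasurable
    hf.aemeasurable).mp h1

lemma gauss_rv_integral_pow {f : Ω → ℝ} (hf : Measurable f) {v : ℝ≥0}
    (h : Measure.map f P = gaussianReal 0 v) (m : ℕ) :
    ∫ ω, f ω ^ (2*m) ∂P = gmom (2*m) * (v:ℝ) ^ m := by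
  rw [← integral_pow_gaussianReal v m, ← h,
    integral_map hf.aemeasurable (measurable_id'.pow_const _).aestronglyMeasurable]

end RV

lemma rpow_root_le {I w p : ℝ} (hp : 0 < p) (h : |I| ^ p ≤ w) : I ≤ w ^ (p⁻¹ : ℝ) := by
  calc I ≤ |I| := le_abs_self I
    _ = (|I| ^ p) ^ (p⁻¹ : ℝ) := by
        rw [← Real.rpow_mul (abs_nonneg I), mul_inv_cancel₀ hp.ne', Real.rpow_one]
    _ ≤ w ^ (p⁻¹ : ℝ) :=
        Real.rpow_le_rpow (Real.rpow_nonneg (abs_nonneg _) _) h (inv_nonneg.mpr hp.le)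

lemma geom_sum_pow_bound (x y : ℝ) (n : ℕ) :
    (∑ i ∈ Finset.range n, x ^ i * y ^ (n - 1 - i)) ^ 4
      ≤ (n:ℝ)^4 * (x ^ (4*(n-1)) + y ^ (4*(n-1))) := by
  set m := n - 1 with hm
  set M := max |x| |y| with hMdef
  have hM0 : 0 ≤ M := le_trans (abs_nonneg x) (le_max_left _ _)
  set T := ∑ i ∈ Finset.range n, x ^ i * y ^ (n - 1 - i) with hT
  have h1 : |T| ≤ (n:ℝ) * M ^ m := by
    calc |T| ≤ ∑ i ∈ Finset.range n, |x ^ i * y ^ (n-1-i)| :=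
          Finset.abs_sum_le_sum_abs _ _
      _ ≤ ∑ _i ∈ Finset.range n, M ^ m := by
          refine Finset.sum_le_sum fun i hi => ?_
          rw [abs_mul, abs_pow, abs_pow]
          calc |x|^i * |y|^(n-1-i) ≤ M^i * M^(n-1-i) := by
                have h1 : |x| ≤ M := le_max_left _ _
                have h2 : |y| ≤ M := le_max_right _ _
                exact mul_le_mul (pow_le_pow_left₀ (abs_nonneg x) h1 i)
                  (pow_le_pow_left₀ (abs_nonneg y) h2 _) (by positivity) (by positivity)
            _ = M ^ (i + (n-1-i)) := (pow_add M i _).symm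
            _ = M ^ m := by
                congr 1
                rw [Finset.mem_range] at hi
                omega
      _ = (n:ℝ) * M^m := by
          rw [Finset.sum_const, Finset.card_range, nsmul_eq_mul]
  have h2 : T ^ 4 ≤ ((n:ℝ) * M ^ m) ^ 4 := by
    have habs : T ^ 4 = |T| ^ 4 := by
      rw [pow_abs, abs_of_nonneg]
      positivity
    rw [habs]
    exact pow_le_pow_left₀ (abs_nonneg T) h1 4
  have h3 : M ^ (4*m) ≤ x ^ (4*m) + y ^ (4*m) := by
    have hx4 : |x| ^ (4*m) = x ^ (4*m) := by
      rw [pow_abs, abs_of_nonneg]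
      rw [mul_comm, pow_mul]
      positivity
    have hy4 : |y| ^ (4*m) = y ^ (4*m) := by
      rw [pow_abs, abs_of_nonneg]
      rw [mul_comm, pow_mul]
      positivity
    rcases max_cases |x| |y| with ⟨hEq, _⟩ | ⟨hEq, _⟩
    · rw [← hMdef] at hEq
      rw [hEq, hx4]
      have : (0:ℝ) ≤ y ^ (4*m) := by rw [mul_comm, pow_mul]; positivity
      linarith
    · rw [← hMdef] at hEq
      rw [hEq, hy4]
      have : (0:ℝ) ≤ x ^ (4*m) := by rw [mul_comm, pow_mul]; positivity
      linarith
  calc T ^ 4 ≤ ((n:ℝ) * M ^ m) ^ 4 := h2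
    _ = (n:ℝ)^4 * M ^ (4*m) := by rw [mul_pow, ← pow_mul, mul_comm m 4]
    _ ≤ (n:ℝ)^4 * (x ^ (4*m) + y ^ (4*m)) := by
        have : (0:ℝ) ≤ (n:ℝ)^4 := by positivity
        exact mul_le_mul_of_nonneg_left h3 this

/-- let `(X,Y)` be a centred Gaussian process in `ℝ²` with continuous bounded
variation paths whose joint covariance has `ρ`-variation controlled by a 2D control `ω`,
`ρ < 2`, `γ > ρ`. With `X^{(n)}_{s,t} = (X_{s,t})ⁿ/n!`, for every `n` there is `C(n)`
such that `|X^{(n)}_{s,t} − Y^{(n)}_{s,t}|_{L²} ≤ C(n)·ε·ω([s,t]²)^{1/(2γ)}·ω([s,t]²)^{(n−1)/(2ρ)}`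
for all `s < t`, where `ε² = V_∞(R_{X−Y},[s,t]²)^{1−ρ/γ}`. -/
theorem diff_powers_L2_estimate
    {Ω : Type*} [MeasurableSpace Ω] (P : Measure Ω) [IsProbabilityMeasure P]
    (X Y : ℝ → Ω → ℝ)
    (hXm : ∀ u, Measurable (X u)) (hYm : ∀ u, Measurable (Y u))
    (hpathX : ∀ ω' : Ω, ContinuousOn (fun u => X u ω') (Icc 0 1) ∧
      BoundedVariationOn (fun u => X u ω') (Icc 0 1))
    (hpathY : ∀ ω' : Ω, ContinuousOn (fun u => Y u ω') (Icc 0 1) ∧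
      BoundedVariationOn (fun u => Y u ω') (Icc 0 1))
    (hgauss : ∀ (m : ℕ) (idx : Fin m → Bool × ℝ) (c : Fin m → ℝ),
      (∀ i, (idx i).2 ∈ Icc (0:ℝ) 1) →
      ∃ v : ℝ≥0,
        Measure.map
          (fun ω' => ∑ i, c i * (if (idx i).1 then X (idx i).2 ω' else Y (idx i).2 ω')) P
          = gaussianReal 0 v)
    (ρ γ : ℝ) (hρ : 1 ≤ ρ) (hρ2 : ρ < 2) (hργ : ρ < γ)
    (ω : ℝ → ℝ → ℝ → ℝ → ℝ) (hω : IsControl2 ω)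
    (hcov : ∀ Z W : ℝ → Ω → ℝ,
      (Z = X ∨ Z = Y ∨ Z = fun u ω' => X u ω' - Y u ω') →
      (W = X ∨ W = Y ∨ W = fun u ω' => X u ω' - Y u ω') →
      ∀ a b c d : ℝ, a ∈ Icc (0:ℝ) 1 → b ∈ Icc (0:ℝ) 1 → c ∈ Icc (0:ℝ) 1 →
        d ∈ Icc (0:ℝ) 1 → a ≤ b → c ≤ d →
        |∫ ω', (Z b ω' - Z a ω') * (W d ω' - W c ω') ∂P| ^ ρ ≤ ω a b c d) :
    ∀ n : ℕ, 1 ≤ n → ∃ C : ℝ, 0 < C ∧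
      ∀ s t : ℝ, 0 ≤ s → s < t → t ≤ 1 →
        eLpNorm
          (fun ω' => (X t ω' - X s ω') ^ n / (n.factorial : ℝ)
            - (Y t ω' - Y s ω') ^ n / (n.factorial : ℝ)) 2 P
          ≤ ENNReal.ofReal C
            * (Vinf (fun u v => ∫ ω', (X u ω' - Y u ω') * (X v ω' - Y v ω') ∂P) s t s t)
                ^ ((1 - ρ / γ) / 2)
            * ENNReal.ofReal ((ω s t s t) ^ (1 / (2 * γ)) * (ω s t s t) ^ (((n:ℝ) - 1) / (2 * ρ))) := by
  intro n hn
  have hκ1 : 0 < gmom 2 := gmom_two_pos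
  have hg4 : 0 ≤ gmom 4 := by
    have h := gmom_nonneg 2
    norm_num at h
    exact h
  set m := n - 1 with hmdef
  have hg4m : 0 ≤ gmom (4*m) := by
    have h := gmom_nonneg (2*m)
    rwa [show 2*(2*m) = 4*m by ring] at h
  set c2 : ℝ := 2 * (n:ℝ)^4 * gmom 4 * gmom (4*m) /
      ((gmom 2)^(2*m+2) * ((n.factorial : ℝ))^4) with hc2def
  have hfactpos : (0:ℝ) < (n.factorial : ℝ) := by
    exact_mod_cast n.factorial_pos
  have hc2nn : 0 ≤ c2 := by
    apply div_nonneg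
    · have hn4 : (0:ℝ) ≤ (n:ℝ)^4 := by positivity
      have : (0:ℝ) ≤ 2 * (n:ℝ)^4 := by positivity
      exact mul_nonneg (mul_nonneg this hg4) hg4m
    · positivity
  set c4 : ℝ := Real.sqrt c2 with hc4def
  have hc4nn : 0 ≤ c4 := Real.sqrt_nonneg _
  refine ⟨c4 ^ (2⁻¹:ℝ) + 1, by positivity, ?_⟩
  intro s t hs hst ht
  have hsI : s ∈ Icc (0:ℝ) 1 := ⟨hs, hst.le.trans ht⟩
  have htI : t ∈ Icc (0:ℝ) 1 := ⟨hs.trans hst.le, ht⟩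
  have hρ0 : (0:ℝ) < ρ := lt_of_lt_of_le one_pos hρ
  have hγ0 : (0:ℝ) < γ := lt_trans hρ0 hργ
  set w := ω s t s t with hwdef
  have hwnn : 0 ≤ w := hω.2.1 s t s t
  set r := w ^ (ρ⁻¹ : ℝ) with hrdef
  have hrnn : 0 ≤ r := Real.rpow_nonneg hwnn _
  set a : Ω → ℝ := fun ω' => X t ω' - X s ω' with hadef
  set b : Ω → ℝ := fun ω' => Y t ω' - Y s ω' with hbdef
  set d : Ω → ℝ := fun ω' => a ω' - b ω' with hddef
  set S : Ω → ℝ := fun ω' => ∑ i ∈ Finset.range n, a ω' ^ i * b ω' ^ (n - 1 - i) with hSdef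
  have hameas : Measurable a := (hXm t).sub (hXm s)
  have hbmeas : Measurable b := (hYm t).sub (hYm s)
  have hdmeas : Measurable d := hameas.sub hbmeas
  have hSmeas : Measurable S :=
    Finset.measurable_sum _ fun i _ => (hameas.pow_const _).mul (hbmeas.pow_const _)
  -- Gaussianity of a, b, d
  obtain ⟨va, hva⟩ : ∃ v : ℝ≥0, Measure.map a P = gaussianReal 0 v := by
    have hmem : ∀ i : Fin 2, ((![(true, t), (true, s)]) i).2 ∈ Icc (0:ℝ) 1 := by
      intro i
      fin_cases i
      · simpa using htI
      · simpa using hsI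
    obtain ⟨v, hv⟩ := hgauss 2 ![(true, t), (true, s)] ![1, -1] hmem
    refine ⟨v, ?_⟩
    rw [← hv]
    congr 1
    funext ω'
    rw [hadef]
    simp [Fin.sum_univ_two]
    ring
  obtain ⟨vb, hvb⟩ : ∃ v : ℝ≥0, Measure.map b P = gaussianReal 0 v := by
    have hmem : ∀ i : Fin 2, ((![(false, t), (false, s)]) i).2 ∈ Icc (0:ℝ) 1 := by
      intro i
      fin_cases i
      · simpa using htI
      · simpa using hsI
    obtain ⟨v, hv⟩ := hgauss 2 ![(false, t), (false, s)] ![1, -1] hmem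
    refine ⟨v, ?_⟩
    rw [← hv]
    congr 1
    funext ω'
    rw [hbdef]
    simp [Fin.sum_univ_two]
    ring
  obtain ⟨vd, hvd⟩ : ∃ v : ℝ≥0, Measure.map d P = gaussianReal 0 v := by
    have hmem : ∀ i : Fin 4,
        ((![(true, t), (true, s), (false, t), (false, s)]) i).2 ∈ Icc (0:ℝ) 1 := by
      intro i
      fin_cases i
      · simpa using htI
      · simpa using hsI
      · simpa using htI
      · simpa using hsI
    obtain ⟨v, hv⟩ := hgauss 4 ![(true, t), (true, s), (false, t), (false, s)]
      ![1, -1, -1, 1] hmem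
    refine ⟨v, ?_⟩
    rw [← hv]
    congr 1
    funext ω'
    rw [hddef, hadef, hbdef]
    simp [Fin.sum_univ_four]
    ring
  -- second moment identities
  have hDeq' := gauss_rv_integral_pow P hdmeas hvd 1
  have hAeq' := gauss_rv_integral_pow P hameas hva 1
  have hBeq' := gauss_rv_integral_pow P hbmeas hvb 1
  set D : ℝ := ∫ ω', d ω' ^ 2 ∂P with hDdef
  have hDeq : D = gmom 2 * (vd:ℝ) := by
    rw [hDdef]
    simpa using hDeq'
  have hAeq : ∫ ω', a ω' ^ 2 ∂P = gmom 2 * (va:ℝ) := by simpa using hAeq'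
  have hBeq : ∫ ω', b ω' ^ 2 ∂P = gmom 2 * (vb:ℝ) := by simpa using hBeq'
  have hDnn : 0 ≤ D := integral_nonneg fun ω' => sq_nonneg _
  have hd2int : Integrable (fun ω' => d ω' ^ 2) P := gauss_rv_integrable_pow P hdmeas hvd 2
  -- covariance bounds from hcov
  have hAle : ∫ ω', a ω' ^ 2 ∂P ≤ r := by
    have h := hcov X X (Or.inl rfl) (Or.inl rfl) s t s t hsI htI hsI htI hst.le hst.le
    have h2 : (fun ω' => (X t ω' - X s ω') * (X t ω' - X s ω')) = fun ω' => a ω' ^ 2 := by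
      funext ω'
      rw [hadef]
      ring
    rw [h2] at h
    exact rpow_root_le hρ0 h
  have hBle : ∫ ω', b ω' ^ 2 ∂P ≤ r := by
    have h := hcov Y Y (Or.inr (Or.inl rfl)) (Or.inr (Or.inl rfl)) s t s t hsI htI hsI htI
      hst.le hst.le
    have h2 : (fun ω' => (Y t ω' - Y s ω') * (Y t ω' - Y s ω')) = fun ω' => b ω' ^ 2 := by
      funext ω'
      rw [hbdef]
      ring
    rw [h2] at h
    exact rpow_root_le hρ0 h
  have hDle : D ≤ r := by
    have h := hcov (fun u ω' => X u ω' - Y u ω') (fun u ω' => X u ω' - Y u ω')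
      (Or.inr (Or.inr rfl)) (Or.inr (Or.inr rfl)) s t s t hsI htI hsI htI hst.le hst.le
    have h2 : (fun ω' => ((X t ω' - Y t ω') - (X s ω' - Y s ω'))
        * ((X t ω' - Y t ω') - (X s ω' - Y s ω'))) = fun ω' => d ω' ^ 2 := by
      funext ω'
      rw [hddef, hadef, hbdef]
      ring
    rw [h2] at h
    exact rpow_root_le hρ0 h
  -- identify the function in the goal
  have hWeq : (fun ω' => (X t ω' - X s ω') ^ n / (n.factorial : ℝ)
      - (Y t ω' - Y s ω') ^ n / (n.factorial : ℝ))
      = fun ω' => d ω' * S ω' / (n.factorial : ℝ) := by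
    funext ω'
    rw [div_sub_div_same, ← geom_sum₂_mul (X t ω' - X s ω') (Y t ω' - Y s ω') n]
    rw [hSdef, hddef, hadef, hbdef]
    ring
  rw [hWeq]
  -- Vinf lower bound
  obtain ⟨vzs, hvzs⟩ : ∃ v : ℝ≥0,
      Measure.map (fun ω' => X s ω' - Y s ω') P = gaussianReal 0 v := by
    have hmem : ∀ i : Fin 2, ((![(true, s), (false, s)]) i).2 ∈ Icc (0:ℝ) 1 := by
      intro i
      fin_cases i <;> simpa using hsI
    obtain ⟨v, hv⟩ := hgauss 2 ![(true, s), (false, s)] ![1, -1] hmem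
    refine ⟨v, ?_⟩
    rw [← hv]
    congr 1
    funext ω'
    simp [Fin.sum_univ_two]
    ring
  obtain ⟨vzt, hvzt⟩ : ∃ v : ℝ≥0,
      Measure.map (fun ω' => X t ω' - Y t ω') P = gaussianReal 0 v := by
    have hmem : ∀ i : Fin 2, ((![(true, t), (false, t)]) i).2 ∈ Icc (0:ℝ) 1 := by
      intro i
      fin_cases i <;> simpa using htI
    obtain ⟨v, hv⟩ := hgauss 2 ![(true, t), (false, t)] ![1, -1] hmem
    refine ⟨v, ?_⟩
    rw [← hv]
    congr 1
    funext ω'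
    simp [Fin.sum_univ_two]
    ring
  obtain ⟨vzst, hvzst⟩ : ∃ v : ℝ≥0,
      Measure.map (fun ω' => (X t ω' - Y t ω') + (X s ω' - Y s ω')) P = gaussianReal 0 v := by
    have hmem : ∀ i : Fin 4,
        ((![(true, t), (false, t), (true, s), (false, s)]) i).2 ∈ Icc (0:ℝ) 1 := by
      intro i
      fin_cases i
      · simpa using htI
      · simpa using htI
      · simpa using hsI
      · simpa using hsI
    obtain ⟨v, hv⟩ := hgauss 4 ![(true, t), (false, t), (true, s), (false, s)]
      ![1, -1, 1, -1] hmem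
    refine ⟨v, ?_⟩
    rw [← hv]
    congr 1
    funext ω'
    simp [Fin.sum_univ_four]
    ring
  have iZs2 : Integrable (fun ω' => (X s ω' - Y s ω') ^ 2) P :=
    gauss_rv_integrable_pow P ((hXm s).sub (hYm s)) hvzs 2
  have iZt2 : Integrable (fun ω' => (X t ω' - Y t ω') ^ 2) P :=
    gauss_rv_integrable_pow P ((hXm t).sub (hYm t)) hvzt 2
  have iZst2 : Integrable (fun ω' => ((X t ω' - Y t ω') + (X s ω' - Y s ω')) ^ 2) P :=
    gauss_rv_integrable_pow P (((hXm t).sub (hYm t)).add ((hXm s).sub (hYm s))) hvzst 2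
  have iZts : Integrable (fun ω' => (X t ω' - Y t ω') * (X s ω' - Y s ω')) P := by
    have heq : (fun ω' => (X t ω' - Y t ω') * (X s ω' - Y s ω'))
        = fun ω' => (((X t ω' - Y t ω') + (X s ω' - Y s ω')) ^ 2
            - (X t ω' - Y t ω') ^ 2 - (X s ω' - Y s ω') ^ 2) / 2 := by
      funext ω'
      ring
    rw [heq]
    exact ((iZst2.sub iZt2).sub iZs2).div_const 2
  have iZst : Integrable (fun ω' => (X s ω' - Y s ω') * (X t ω' - Y t ω')) P := by
    have heq : (fun ω' => (X s ω' - Y s ω') * (X t ω' - Y t ω'))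
        = fun ω' => (X t ω' - Y t ω') * (X s ω' - Y s ω') := by
      funext ω'
      ring
    rw [heq]
    exact iZts
  have iZtt : Integrable (fun ω' => (X t ω' - Y t ω') * (X t ω' - Y t ω')) P := by
    refine iZt2.congr (ae_of_all _ fun ω' => ?_)
    ring
  have iZss : Integrable (fun ω' => (X s ω' - Y s ω') * (X s ω' - Y s ω')) P := by
    refine iZs2.congr (ae_of_all _ fun ω' => ?_)
    ring
  have hDexp : D = (∫ ω', (X t ω' - Y t ω') * (X t ω' - Y t ω') ∂P)
      - (∫ ω', (X t ω' - Y t ω') * (X s ω' - Y s ω') ∂P)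
      - (∫ ω', (X s ω' - Y s ω') * (X t ω' - Y t ω') ∂P)
      + ∫ ω', (X s ω' - Y s ω') * (X s ω' - Y s ω') ∂P := by
    have h1 : D = ∫ ω', ((X t ω' - Y t ω') * (X t ω' - Y t ω')
        - (X t ω' - Y t ω') * (X s ω' - Y s ω')
        - (X s ω' - Y s ω') * (X t ω' - Y t ω')
        + (X s ω' - Y s ω') * (X s ω' - Y s ω')) ∂P := by
      rw [hDdef]
      refine integral_congr_ae (ae_of_all _ fun ω' => ?_)
      show d ω' ^ 2 = _
      rw [hddef, hadef, hbdef]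
      ring
    rw [h1, integral_add (f := fun ω' => (X t ω' - Y t ω') * (X t ω' - Y t ω')
        - (X t ω' - Y t ω') * (X s ω' - Y s ω') - (X s ω' - Y s ω') * (X t ω' - Y t ω'))
        (g := fun ω' => (X s ω' - Y s ω') * (X s ω' - Y s ω'))
        ((iZtt.sub iZts).sub iZst) iZss,
      integral_sub (f := fun ω' => (X t ω' - Y t ω') * (X t ω' - Y t ω')
        - (X t ω' - Y t ω') * (X s ω' - Y s ω'))
        (g := fun ω' => (X s ω' - Y s ω') * (X t ω' - Y t ω'))
        (iZtt.sub iZts) iZst,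
      integral_sub iZtt iZts]
  have hinc : inc2 (fun u v => ∫ ω', (X u ω' - Y u ω') * (X v ω' - Y v ω') ∂P) s t s t
      = D := by
    show (∫ ω', (X t ω' - Y t ω') * (X t ω' - Y t ω') ∂P)
      - (∫ ω', (X t ω' - Y t ω') * (X s ω' - Y s ω') ∂P)
      - (∫ ω', (X s ω' - Y s ω') * (X t ω' - Y t ω') ∂P)
      + (∫ ω', (X s ω' - Y s ω') * (X s ω' - Y s ω') ∂P) = D
    exact hDexp.symm
  have hDVinf : ENNReal.ofReal D
      ≤ Vinf (fun u v => ∫ ω', (X u ω' - Y u ω') * (X v ω' - Y v ω') ∂P) s t s t := by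
    have h1 : ENNReal.ofReal D = ENNReal.ofReal
        |inc2 (fun u v => ∫ ω', (X u ω' - Y u ω') * (X v ω' - Y v ω') ∂P) s t s t| := by
      rw [hinc, abs_of_nonneg hDnn]
    rw [h1, Vinf]
    have hs' : s ∈ Icc s t := left_mem_Icc.mpr hst.le
    have ht' : t ∈ Icc s t := right_mem_Icc.mpr hst.le
    exact le_iSup_of_le s (le_iSup_of_le hs' (le_iSup_of_le t (le_iSup_of_le ht'
      (le_iSup_of_le s (le_iSup_of_le hs' (le_iSup_of_le t (le_iSup_of_le ht'
      (le_iSup_of_le hst.le (le_iSup_of_le hst.le le_rfl)))))))))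
  by_cases hD0 : D = 0
  · -- degenerate case: d = 0 a.e., LHS = 0
    have hdeq : (fun ω' => d ω' ^ 2) =ᵐ[P] 0 :=
      (integral_eq_zero_iff_of_nonneg (fun ω' => sq_nonneg _) hd2int).mp hD0
    have hW0 : (fun ω' => d ω' * S ω' / (n.factorial : ℝ)) =ᵐ[P] 0 := by
      filter_upwards [hdeq] with ω' hω'
      have hd0 : d ω' = 0 := by
        have : d ω' ^ 2 = 0 := hω'
        exact pow_eq_zero_iff two_ne_zero |>.mp this
      simp [hd0]
    rw [eLpNorm_congr_ae hW0, eLpNorm_zero]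
    exact zero_le
  · have hDpos : 0 < D := lt_of_le_of_ne hDnn (Ne.symm hD0)
    have hrpos : 0 < r := lt_of_lt_of_le hDpos hDle
    have hwpos : 0 < w := by
      by_contra hw
      push_neg at hw
      have hw0 : w = 0 := le_antisymm hw hwnn
      rw [hrdef, hw0, Real.zero_rpow (inv_ne_zero hρ0.ne')] at hrpos
      exact lt_irrefl 0 hrpos
    -- moment identities and bounds
    have hd4 : ∫ ω', d ω' ^ 4 ∂P = gmom 4 * (vd:ℝ) ^ 2 := by
      have h := gauss_rv_integral_pow P hdmeas hvd 2
      norm_num at h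
      exact h
    have ha4m : ∫ ω', a ω' ^ (4*m) ∂P = gmom (4*m) * (va:ℝ) ^ (2*m) := by
      have h := gauss_rv_integral_pow P hameas hva (2*m)
      rwa [show 2*(2*m) = 4*m by ring] at h
    have hb4m : ∫ ω', b ω' ^ (4*m) ∂P = gmom (4*m) * (vb:ℝ) ^ (2*m) := by
      have h := gauss_rv_integral_pow P hbmeas hvb (2*m)
      rwa [show 2*(2*m) = 4*m by ring] at h
    have hvdeq : (vd:ℝ) = D / gmom 2 := by
      rw [eq_div_iff hκ1.ne', mul_comm]
      exact hDeq.symm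
    have hvale : (va:ℝ) ≤ r / gmom 2 := by
      rw [le_div_iff₀ hκ1]
      calc (va:ℝ) * gmom 2 = gmom 2 * (va:ℝ) := mul_comm _ _
        _ = ∫ ω', a ω' ^ 2 ∂P := hAeq.symm
        _ ≤ r := hAle
    have hvble : (vb:ℝ) ≤ r / gmom 2 := by
      rw [le_div_iff₀ hκ1]
      calc (vb:ℝ) * gmom 2 = gmom 2 * (vb:ℝ) := mul_comm _ _
        _ = ∫ ω', b ω' ^ 2 ∂P := hBeq.symm
        _ ≤ r := hBle
    have hd4int : Integrable (fun ω' => d ω' ^ 4) P := gauss_rv_integrable_pow P hdmeas hvd 4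
    have ha4mint : Integrable (fun ω' => a ω' ^ (4*m)) P :=
      gauss_rv_integrable_pow P hameas hva (4*m)
    have hb4mint : Integrable (fun ω' => b ω' ^ (4*m)) P :=
      gauss_rv_integrable_pow P hbmeas hvb (4*m)
    have hSbound : ∀ ω', S ω' ^ 4 ≤ (n:ℝ)^4 * (a ω' ^ (4*m) + b ω' ^ (4*m)) := by
      intro ω'
      have h := geom_sum_pow_bound (a ω') (b ω') n
      rw [hmdef]
      simp only [hSdef]
      exact h
    have hS4int : Integrable (fun ω' => S ω' ^ 4) P := by
      refine Integrable.mono' ((ha4mint.add hb4mint).const_mul ((n:ℝ)^4))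
        ((hSmeas.pow_const 4).aestronglyMeasurable) (ae_of_all _ fun ω' => ?_)
      rw [Real.norm_eq_abs, abs_of_nonneg (by positivity : (0:ℝ) ≤ S ω' ^ 4)]
      exact hSbound ω'
    have hIS4nn : 0 ≤ ∫ ω', S ω' ^ 4 ∂P := integral_nonneg fun ω' => by positivity
    have hID4nn : 0 ≤ ∫ ω', d ω' ^ 4 ∂P := integral_nonneg fun ω' => by positivity
    have hIS4le : ∫ ω', S ω' ^ 4 ∂P
        ≤ 2 * (n:ℝ)^4 * gmom (4*m) * (r / gmom 2) ^ (2*m) := by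
      have h1 : ∫ ω', S ω' ^ 4 ∂P ≤ ∫ ω', (n:ℝ)^4 * (a ω' ^ (4*m) + b ω' ^ (4*m)) ∂P :=
        integral_mono hS4int ((ha4mint.add hb4mint).const_mul _) fun ω' => hSbound ω'
      have h2 : ∫ ω', (n:ℝ)^4 * (a ω' ^ (4*m) + b ω' ^ (4*m)) ∂P
          = (n:ℝ)^4 * ((∫ ω', a ω' ^ (4*m) ∂P) + ∫ ω', b ω' ^ (4*m) ∂P) := by
        rw [integral_const_mul, integral_add ha4mint hb4mint]
      have hva2m : (va:ℝ)^(2*m) ≤ (r / gmom 2)^(2*m) :=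
        pow_le_pow_left₀ va.coe_nonneg hvale _
      have hvb2m : (vb:ℝ)^(2*m) ≤ (r / gmom 2)^(2*m) :=
        pow_le_pow_left₀ vb.coe_nonneg hvble _
      have hnn4 : (0:ℝ) ≤ (n:ℝ)^4 := by positivity
      calc ∫ ω', S ω' ^ 4 ∂P ≤ _ := h1
        _ = (n:ℝ)^4 * ((∫ ω', a ω' ^ (4*m) ∂P) + ∫ ω', b ω' ^ (4*m) ∂P) := h2
        _ = (n:ℝ)^4 * (gmom (4*m) * (va:ℝ)^(2*m) + gmom (4*m) * (vb:ℝ)^(2*m)) := by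
            rw [ha4m, hb4m]
        _ ≤ (n:ℝ)^4 * (gmom (4*m) * (r/gmom 2)^(2*m) + gmom (4*m) * (r/gmom 2)^(2*m)) := by
            refine mul_le_mul_of_nonneg_left ?_ hnn4
            exact add_le_add (mul_le_mul_of_nonneg_left hva2m hg4m)
              (mul_le_mul_of_nonneg_left hvb2m hg4m)
        _ = 2 * (n:ℝ)^4 * gmom (4*m) * (r / gmom 2)^(2*m) := by ring
    -- Hoelder
    have hMd : MemLp (fun ω' => d ω' ^ 2) (ENNReal.ofReal 2) P := by
      rw [ENNReal.ofReal_ofNat]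
      refine (memLp_two_iff_integrable_sq
        ((hdmeas.pow_const 2).aestronglyMeasurable)).mpr ?_
      exact hd4int.congr (ae_of_all _ fun ω' => by ring)
    have hMS : MemLp (fun ω' => S ω' ^ 2) (ENNReal.ofReal 2) P := by
      rw [ENNReal.ofReal_ofNat]
      refine (memLp_two_iff_integrable_sq
        ((hSmeas.pow_const 2).aestronglyMeasurable)).mpr ?_
      exact hS4int.congr (ae_of_all _ fun ω' => by ring)
    have hpq : Real.HolderConjugate 2 2 := Real.holderConjugate_iff.mpr ⟨one_lt_two, by norm_num⟩
    have hHo := integral_mul_le_Lp_mul_Lq_of_nonneg hpq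
      (ae_of_all _ fun ω' => sq_nonneg (d ω')) (ae_of_all _ fun ω' => sq_nonneg (S ω')) hMd hMS
    have hrwd : ∫ ω', (d ω' ^ 2) ^ (2:ℝ) ∂P = ∫ ω', d ω' ^ 4 ∂P := by
      refine integral_congr_ae (ae_of_all _ fun ω' => ?_)
      show (d ω' ^ 2) ^ (2:ℝ) = d ω' ^ 4
      rw [Real.rpow_two]
      ring
    have hrwS : ∫ ω', (S ω' ^ 2) ^ (2:ℝ) ∂P = ∫ ω', S ω' ^ 4 ∂P := by
      refine integral_congr_ae (ae_of_all _ fun ω' => ?_)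
      show (S ω' ^ 2) ^ (2:ℝ) = S ω' ^ 4
      rw [Real.rpow_two]
      ring
    rw [hrwd, hrwS] at hHo
    set I : ℝ := ∫ ω', (d ω' * S ω' / (n.factorial:ℝ)) ^ 2 ∂P with hIdef
    have hInn : 0 ≤ I := integral_nonneg fun ω' => sq_nonneg _
    have hIeq : I = (∫ ω', d ω' ^ 2 * S ω' ^ 2 ∂P) / ((n.factorial:ℝ))^2 := by
      rw [hIdef, ← integral_div]
      refine integral_congr_ae (ae_of_all _ fun ω' => ?_)
      field_simp
    have hsqr : ∀ x:ℝ, 0 ≤ x → (x ^ ((1:ℝ)/2)) ^ (2:ℕ) = x := by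
      intro x hx
      rw [← Real.rpow_natCast (x ^ ((1:ℝ)/2)) 2, ← Real.rpow_mul hx]
      norm_num
    have hI2le : I ^ 2 ≤ (∫ ω', d ω' ^ 4 ∂P) * (∫ ω', S ω' ^ 4 ∂P) / ((n.factorial:ℝ))^4 := by
      have hIle : I ≤ ((∫ ω', d ω' ^ 4 ∂P) ^ ((1:ℝ)/2) * (∫ ω', S ω' ^ 4 ∂P) ^ ((1:ℝ)/2))
          / ((n.factorial:ℝ))^2 := by
        rw [hIeq]
        gcongr
      calc I^2 ≤ (((∫ ω', d ω' ^ 4 ∂P) ^ ((1:ℝ)/2) * (∫ ω', S ω' ^ 4 ∂P) ^ ((1:ℝ)/2))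
            / ((n.factorial:ℝ))^2)^2 := pow_le_pow_left₀ hInn hIle 2
        _ = ((∫ ω', d ω' ^ 4 ∂P) ^ ((1:ℝ)/2))^(2:ℕ) * ((∫ ω', S ω' ^ 4 ∂P) ^ ((1:ℝ)/2))^(2:ℕ)
            / ((n.factorial:ℝ))^4 := by ring
        _ = (∫ ω', d ω' ^ 4 ∂P) * (∫ ω', S ω' ^ 4 ∂P) / ((n.factorial:ℝ))^4 := by
            rw [hsqr _ hID4nn, hsqr _ hIS4nn]
    have hfinal2 : I^2 ≤ c2 * D^2 * (r^m)^2 := by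
      have hb1 : (∫ ω', d ω' ^ 4 ∂P) * (∫ ω', S ω' ^ 4 ∂P)
          ≤ (gmom 4 * (D/gmom 2)^2) * (2*(n:ℝ)^4*gmom (4*m)*(r/gmom 2)^(2*m)) := by
        rw [hd4, hvdeq]
        exact mul_le_mul_of_nonneg_left hIS4le (mul_nonneg hg4 (sq_nonneg _))
      calc I^2 ≤ (∫ ω', d ω' ^ 4 ∂P) * (∫ ω', S ω' ^ 4 ∂P) / ((n.factorial:ℝ))^4 := hI2le
        _ ≤ ((gmom 4 * (D/gmom 2)^2) * (2*(n:ℝ)^4*gmom (4*m)*(r/gmom 2)^(2*m)))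
            / ((n.factorial:ℝ))^4 := by
            gcongr
        _ = c2 * D^2 * (r^m)^2 := by
            rw [hc2def, div_pow, div_pow]
            rw [show (2*m) = m*2 by ring, pow_mul r m]
            field_simp
            ring
    set K : ℝ := c4 * D * r^m with hKdef
    have hKnn : 0 ≤ K := mul_nonneg (mul_nonneg hc4nn hDnn) (pow_nonneg hrnn m)
    have hK2 : K^2 = c2 * D^2 * (r^m)^2 := by
      rw [hKdef, mul_pow, mul_pow, hc4def, Real.sq_sqrt hc2nn]
    have hIK : I ≤ K := by
      have h1 : Real.sqrt (I^2) ≤ Real.sqrt (K^2) := by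
        apply Real.sqrt_le_sqrt
        rw [hK2]
        exact hfinal2
      rwa [Real.sqrt_sq hInn, Real.sqrt_sq hKnn] at h1
    -- eLpNorm formula
    have hWmeas : Measurable (fun ω' => d ω' * S ω' / (n.factorial:ℝ)) :=
      (hdmeas.mul hSmeas).div_const _
    have hW2int : Integrable (fun ω' => (d ω' * S ω' / (n.factorial:ℝ))^2) P := by
      refine Integrable.mono' (hd4int.add hS4int) ((hWmeas.pow_const 2).aestronglyMeasurable)
        (ae_of_all _ fun ω' => ?_)
      rw [Real.norm_eq_abs, abs_of_nonneg (sq_nonneg _)]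
      have hf1 : (1:ℝ) ≤ (n.factorial:ℝ) := by exact_mod_cast n.factorial_pos
      have h2 : (d ω' * S ω' / (n.factorial:ℝ))^2 ≤ (d ω' * S ω')^2 := by
        rw [div_pow]
        apply div_le_self (sq_nonneg _)
        calc (1:ℝ) = 1^2 := by norm_num
          _ ≤ ((n.factorial:ℝ))^2 := pow_le_pow_left₀ zero_le_one hf1 2
      have h4 : (d ω' * S ω')^2 = d ω'^2 * S ω'^2 := by ring
      have h5 : 0 ≤ d ω'^4 - 2*(d ω'^2 * S ω'^2) + S ω'^4 := by
        calc (0:ℝ) ≤ (d ω'^2 - S ω'^2)^2 := sq_nonneg _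
          _ = d ω'^4 - 2*(d ω'^2*S ω'^2) + S ω'^4 := by ring
      have h6 : 0 ≤ d ω'^2 * S ω'^2 := by rw [← h4]; exact sq_nonneg _
      show (d ω' * S ω' / (n.factorial:ℝ))^2 ≤ d ω'^4 + S ω'^4
      calc (d ω' * S ω' / (n.factorial:ℝ))^2 ≤ (d ω' * S ω')^2 := h2
        _ = d ω'^2 * S ω'^2 := h4
        _ ≤ d ω'^4 + S ω'^4 := by linarith [h5, h6]
    have hMW : MemLp (fun ω' => d ω' * S ω' / (n.factorial:ℝ)) 2 P :=
      (memLp_two_iff_integrable_sq hWmeas.aestronglyMeasurable).mpr hW2int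
    have hLHS : eLpNorm (fun ω' => d ω' * S ω' / (n.factorial:ℝ)) 2 P
        = ENNReal.ofReal (I ^ ((2:ℝ))⁻¹) := by
      rw [hMW.eLpNorm_eq_integral_rpow_norm (by norm_num) (by norm_num)]
      simp only [ENNReal.toReal_ofNat]
      congr 2
      rw [hIdef]
      refine integral_congr_ae (ae_of_all _ fun ω' => ?_)
      show ‖d ω' * S ω' / (n.factorial:ℝ)‖ ^ (2:ℝ) = (d ω' * S ω' / (n.factorial:ℝ)) ^ 2
      rw [Real.norm_eq_abs, Real.rpow_two, sq_abs]
    -- exponent manipulations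
    have hθnn : 0 ≤ (1 - ρ/γ)/2 := by
      have h1 : ρ/γ ≤ 1 := (div_le_one hγ0).mpr hργ.le
      linarith
    have hsplit : D ^ ((2:ℝ))⁻¹ = D ^ ((1 - ρ/γ)/2) * D ^ (ρ/(2*γ)) := by
      rw [← Real.rpow_add hDpos]
      congr 1
      field_simp [hγ0.ne']
      ring
    have hstep1 : D ^ (ρ/(2*γ)) ≤ w ^ (1/(2*γ)) := by
      calc D ^ (ρ/(2*γ)) ≤ r ^ (ρ/(2*γ)) :=
            Real.rpow_le_rpow hDnn hDle (by positivity)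
        _ = w ^ (ρ⁻¹ * (ρ/(2*γ))) := by
            rw [hrdef, ← Real.rpow_mul hwnn]
        _ = w ^ (1/(2*γ)) := by
            congr 1
            field_simp
    have hrm : (r^m : ℝ) ^ ((2:ℝ))⁻¹ = w ^ (((n:ℝ)-1)/(2*ρ)) := by
      rw [hrdef, ← Real.rpow_natCast (w ^ (ρ⁻¹:ℝ)) m, ← Real.rpow_mul hwnn,
        ← Real.rpow_mul hwnn]
      congr 1
      rw [hmdef, Nat.cast_sub hn, Nat.cast_one,
        eq_div_iff (by positivity : (2*ρ) ≠ 0)]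
      field_simp
    have hKfin : K ^ ((2:ℝ))⁻¹ ≤ c4 ^ ((2:ℝ))⁻¹
        * (D ^ ((1-ρ/γ)/2) * (w ^ (1/(2*γ)) * w ^ (((n:ℝ)-1)/(2*ρ)))) := by
      calc K ^ ((2:ℝ))⁻¹
          = c4 ^ ((2:ℝ))⁻¹ * D ^ ((2:ℝ))⁻¹ * ((r^m : ℝ)) ^ ((2:ℝ))⁻¹ := by
            rw [hKdef, Real.mul_rpow (mul_nonneg hc4nn hDnn) (pow_nonneg hrnn m),
              Real.mul_rpow hc4nn hDnn]
        _ = c4 ^ ((2:ℝ))⁻¹ * (D ^ ((1-ρ/γ)/2) * D ^ (ρ/(2*γ))) * w ^ (((n:ℝ)-1)/(2*ρ)) := by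
            rw [hsplit, hrm]
        _ ≤ c4 ^ ((2:ℝ))⁻¹ * (D ^ ((1-ρ/γ)/2) * w ^ (1/(2*γ))) * w ^ (((n:ℝ)-1)/(2*ρ)) := by
            refine mul_le_mul_of_nonneg_right
              (mul_le_mul_of_nonneg_left ?_ (Real.rpow_nonneg hc4nn _))
              (Real.rpow_nonneg hwnn _)
            exact mul_le_mul_of_nonneg_left hstep1 (Real.rpow_nonneg hDnn _)
        _ = c4 ^ ((2:ℝ))⁻¹ * (D ^ ((1-ρ/γ)/2) * (w ^ (1/(2*γ)) * w ^ (((n:ℝ)-1)/(2*ρ)))) := by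
            ring
    rw [hLHS]
    calc ENNReal.ofReal (I ^ ((2:ℝ))⁻¹)
        ≤ ENNReal.ofReal (c4 ^ ((2:ℝ))⁻¹
            * (D ^ ((1-ρ/γ)/2) * (w ^ (1/(2*γ)) * w ^ (((n:ℝ)-1)/(2*ρ))))) := by
          apply ENNReal.ofReal_le_ofReal
          calc I ^ ((2:ℝ))⁻¹ ≤ K ^ ((2:ℝ))⁻¹ :=
                Real.rpow_le_rpow hInn hIK (by norm_num)
            _ ≤ _ := hKfin
      _ = ENNReal.ofReal (c4 ^ ((2:ℝ))⁻¹) * (ENNReal.ofReal (D ^ ((1-ρ/γ)/2))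
            * ENNReal.ofReal (w ^ (1/(2*γ)) * w ^ (((n:ℝ)-1)/(2*ρ)))) := by
          rw [ENNReal.ofReal_mul (Real.rpow_nonneg hc4nn _),
            ENNReal.ofReal_mul (Real.rpow_nonneg hDnn _)]
      _ ≤ ENNReal.ofReal (c4 ^ (2⁻¹:ℝ) + 1)
            * ((Vinf (fun u v => ∫ ω', (X u ω' - Y u ω') * (X v ω' - Y v ω') ∂P) s t s t)
                ^ ((1 - ρ/γ)/2)
            * ENNReal.ofReal (w ^ (1/(2*γ)) * w ^ (((n:ℝ)-1)/(2*ρ)))) := by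
          refine mul_le_mul' (ENNReal.ofReal_le_ofReal (by linarith)) ?_
          refine mul_le_mul' ?_ le_rfl
          rw [← ENNReal.ofReal_rpow_of_pos hDpos]
          exact ENNReal.rpow_le_rpow hDVinf hθnn
      _ = ENNReal.ofReal (c4 ^ (2⁻¹:ℝ) + 1)
            * (Vinf (fun u v => ∫ ω', (X u ω' - Y u ω') * (X v ω' - Y v ω') ∂P) s t s t)
                ^ ((1 - ρ/γ)/2)
            * ENNReal.ofReal (w ^ (1/(2*γ)) * w ^ (((n:ℝ)-1)/(2*ρ))) := by
          rw [mul_assoc]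


end
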